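/- Let A = ℕ ∩ ⋃_{n∈ℕ} [4^n, (2 - 1/n)·4^n). Then there is no infinite set B ⊆ ℕ and no t ∈ ℕ such that B + B + t ⊆ A. -/

import Mathlib

open Filter
open scoped Classical

noncomputable def countIn (A : Set ℕ) (N : ℕ) : ℕ :=
  ((Finset.Icc 1 N).filter (fun n => n ∈ A)).card

noncomputable def upperDensity (A : Set ℕ) : ℝ :=
  limsup (fun N => (countIn A N : ℝ) / N) atTop

noncomputable def lowerDensity (A : Set ℕ) : ℝ :=
  liminf (fun N => (countIn A N : ℝ) / N) atTop

def hasDensity (A : Set ℕ) (d : ℝ) : Prop :=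
  Tendsto (fun N => (countIn A N : ℝ) / N) atTop (nhds d)

theorem no_BBt_in_example :
    ∀ (B : Set ℕ) (t : ℕ), B.Infinite →
      ¬ (∀ b₁ ∈ B, ∀ b₂ ∈ B,
          b₁ + b₂ + t ∈ {m : ℕ | ∃ n : ℕ, 1 ≤ n ∧ 4 ^ n ≤ m ∧ (m : ℝ) < (2 - 1 / n) * 4 ^ n}) := by
  intro B t hB hsub
  obtain ⟨b₁, hb₁⟩ := hB.nonempty
  set K := 2 * b₁ + t with hK
  obtain ⟨b₂, hb₂, hgt⟩ := hB.exists_gt (max b₁ (4 ^ K))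
  have hb₁₂ : b₁ ≤ b₂ := le_of_lt (lt_of_le_of_lt (le_max_left _ _) hgt)
  have hb4K : 4 ^ K ≤ b₂ := le_of_lt (lt_of_le_of_lt (le_max_right _ _) hgt)
  obtain ⟨n, hn1, hnle, hnlt⟩ := hsub b₂ hb₂ b₂ hb₂
  obtain ⟨m, hm1, hmle, hmlt⟩ := hsub b₁ hb₁ b₂ hb₂
  -- basic real facts
  have hn1' : (1:ℝ) ≤ (n:ℝ) := by exact_mod_cast hn1
  have hm1' : (1:ℝ) ≤ (m:ℝ) := by exact_mod_cast hm1
  have hn0 : (0:ℝ) < (n:ℝ) := by linarith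
  have hm0 : (0:ℝ) < (m:ℝ) := by linarith
  have h4n : (0:ℝ) < (4:ℝ) ^ n := by positivity
  have h4m : (0:ℝ) < (4:ℝ) ^ m := by positivity
  have hinvn : 1 / (n:ℝ) ≤ 1 := by
    rw [div_le_one hn0]; exact hn1'
  have hinvn0 : 0 < 1 / (n:ℝ) := by positivity
  have hinvm0 : 0 < 1 / (m:ℝ) := by positivity
  have hnle' : ((4:ℝ)) ^ n ≤ ((b₂ + b₂ + t : ℕ) : ℝ) := by
    exact_mod_cast hnle
  have hmle' : ((4:ℝ)) ^ m ≤ ((b₁ + b₂ + t : ℕ) : ℝ) := by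
    exact_mod_cast hmle
  -- m ≤ n : 4^m ≤ x ≤ z < 4^(n+1)
  have hxz : ((b₁ + b₂ + t : ℕ) : ℝ) ≤ ((b₂ + b₂ + t : ℕ) : ℝ) := by
    have : b₁ + b₂ + t ≤ b₂ + b₂ + t := by omega
    exact_mod_cast this
  have hmn : m ≤ n := by
    have h1 : ((4:ℝ)) ^ m < (4:ℝ) ^ (n + 1) := by
      have : ((b₂ + b₂ + t : ℕ) : ℝ) < (4:ℝ)^(n+1) := by
        calc ((b₂ + b₂ + t : ℕ) : ℝ) < (2 - 1/(n:ℝ)) * 4 ^ n := hnlt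
          _ ≤ 2 * 4 ^ n := by nlinarith
          _ < 4 ^ (n+1) := by rw [pow_succ]; nlinarith
      linarith [hmle'.trans hxz]
    have := (pow_lt_pow_iff_right₀ (a := (4:ℝ)) (by norm_num)).mp h1
    omega
  -- n ≤ m : 4^n ≤ z ≤ 2x < 4^(m+1)
  have hnm : n ≤ m := by
    have hz2x : ((b₂ + b₂ + t : ℕ) : ℝ) ≤ 2 * ((b₁ + b₂ + t : ℕ) : ℝ) := by
      have : (b₂ + b₂ + t) ≤ 2 * (b₁ + b₂ + t) := by omega
      exact_mod_cast this
    have h1 : ((4:ℝ)) ^ n < (4:ℝ) ^ (m + 1) := by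
      have h2 : 2 * ((b₁ + b₂ + t : ℕ) : ℝ) < 4 ^ (m+1) := by
        have := hmlt
        rw [pow_succ]
        nlinarith
      linarith [hnle'.trans hz2x]
    have := (pow_lt_pow_iff_right₀ (a := (4:ℝ)) (by norm_num)).mp h1
    omega
  have hmn' : m = n := le_antisymm hmn hnm
  subst hmn'
  -- now: 4^m ≤ b₁+b₂+t and 2b₂+t < (2-1/m)4^m  ⇒  4^m/m < 2b₁+t
  have hkey : (4:ℝ) ^ m < (m:ℝ) * ((K:ℕ) : ℝ) := by
    have h1 : ((b₁:ℝ) + b₂ + t) = ((b₁ + b₂ + t : ℕ) : ℝ) := by push_cast; ring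
    have h2 : ((b₂:ℝ) + b₂ + t) = ((b₂ + b₂ + t : ℕ) : ℝ) := by push_cast; ring
    have hK' : ((K:ℕ):ℝ) = 2 * (b₁:ℝ) + (t:ℝ) := by rw [hK]; push_cast; ring
    rw [hK']
    have hA : (4:ℝ)^m ≤ (b₁:ℝ) + b₂ + t := by rw [h1]; exact hmle'
    have hB' : ((b₂:ℝ) + b₂ + t) < (2 - 1/(m:ℝ)) * 4^m := by rw [h2]; exact hnlt
    have hdiv : (1/(m:ℝ)) * 4^m < 2*(b₁:ℝ) + (t:ℝ) := by nlinarith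
    have := (div_lt_iff₀ hm0).mp (by
      rw [div_eq_mul_inv, mul_comm]
      rw [one_div] at hdiv
      linarith : (4:ℝ)^m / (m:ℝ) < 2*(b₁:ℝ) + (t:ℝ))
    linarith
  -- b₂ < 4^m in ℕ
  have hb2lt : b₂ < 4 ^ m := by
    have : ((b₂:ℝ)) < (4:ℝ)^m := by
      have h2 : ((b₂:ℝ) + b₂ + t) = ((b₂ + b₂ + t : ℕ) : ℝ) := by push_cast; ring
      have hB' : ((b₂:ℝ) + b₂ + t) < (2 - 1/(m:ℝ)) * 4^m := by rw [h2]; exact hnlt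
      have hexp : (2 - 1/(m:ℝ)) * 4^m = 2 * 4^m - (1/(m:ℝ)) * 4^m := by ring
      have hpos : 0 < (1/(m:ℝ)) * 4^m := mul_pos hinvm0 h4m
      have ht0 : (0:ℝ) ≤ (t:ℝ) := Nat.cast_nonneg t
      linarith [hexp ▸ hB']
    exact_mod_cast this
  -- K ≤ m
  have hKm : K ≤ m := by
    by_contra h
    push_neg at h
    have : (4:ℕ)^m < 4^K := Nat.pow_lt_pow_right (by norm_num) h
    omega
  -- final contradiction: 4^m < m*K ≤ m² ≤ 4^m
  have hfin : (4:ℕ)^m < m * K := by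
    have : ((4:ℕ)^m : ℝ) < ((m * K : ℕ) : ℝ) := by push_cast; exact_mod_cast hkey
    exact_mod_cast this
  have hm2 : m * m ≤ 4 ^ m := by
    have h1 : m < 2 ^ m := Nat.lt_two_pow_self (n := m)
    calc m * m ≤ 2^m * 2^m := Nat.mul_le_mul (le_of_lt h1) (le_of_lt h1)
      _ = 4 ^ m := by rw [← Nat.pow_add]; rw [show m + m = 2 * m by ring, Nat.pow_mul]
  have : m * K ≤ m * m := Nat.mul_le_mul_left m hKm
  omega
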